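/- If G is a connected simple graph whose peripheral subgraph (the subgraph induced by the periphery) is connected and whose annular subgraph (the subgraph induced by the annulus) is nonempty and connected, then G has at least 13 vertices. -/

import Mathlib

/-- Eccentricity of a vertex in a (finite connected) simple graph:
the maximum distance from `v` to any vertex. -/
noncomputable def SimpleGraph.mecc {V : Type*} (G : SimpleGraph V) (v : V) : ℕ :=
  sSup (Set.range (G.dist v))

/-- Radius: the minimum eccentricity. -/
noncomputable def SimpleGraph.mrad {V : Type*} (G : SimpleGraph V) : ℕ :=
  sInf (Set.range G.mecc)

/-- Diameter: the maximum eccentricity. -/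
noncomputable def SimpleGraph.mdiam {V : Type*} (G : SimpleGraph V) : ℕ :=
  sSup (Set.range G.mecc)

/-- The center: the set of vertices of minimum eccentricity. -/
noncomputable def SimpleGraph.mcenter {V : Type*} (G : SimpleGraph V) : Set V :=
  {v | G.mecc v = G.mrad}

/-- The annulus: the set of vertices of intermediate eccentricity. -/
noncomputable def SimpleGraph.mannulus {V : Type*} (G : SimpleGraph V) : Set V :=
  {v | G.mrad < G.mecc v ∧ G.mecc v < G.mdiam}

/-- The periphery: the set of vertices of maximum eccentricity. -/
noncomputable def SimpleGraph.mperiphery {V : Type*} (G : SimpleGraph V) : Set V :=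
  {v | G.mecc v = G.mdiam}

set_option linter.unusedSectionVars false

open SimpleGraph

section AUX
variable {V : Type*} [Fintype V] {G : SimpleGraph V}

section Basics
variable (hG : G.Connected)

lemma dist_le_mecc (v w : V) : G.dist v w ≤ G.mecc v :=
  le_csSup (Set.finite_range _).bddAbove (Set.mem_range_self w)

lemma exists_partner (v : V) : ∃ w, G.dist v w = G.mecc v := by
  have : G.mecc v ∈ Set.range (G.dist v) :=
    Nat.sSup_mem ⟨_, Set.mem_range_self v⟩ (Set.finite_range _).bddAbove
  exact this

include hG in
lemma mecc_le_add (v w : V) : G.mecc v ≤ G.dist v w + G.mecc w := by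
  refine csSup_le ⟨_, Set.mem_range_self v⟩ ?_
  rintro _ ⟨x, rfl⟩
  calc G.dist v x ≤ G.dist v w + G.dist w x := hG.dist_triangle
    _ ≤ G.dist v w + G.mecc w := by gcongr; exact dist_le_mecc w x
end Basics

section Basics2
variable (hG : G.Connected)

include hG in
lemma mecc_le_mdiam (v : V) : G.mecc v ≤ G.mdiam :=
  le_csSup (Set.finite_range _).bddAbove (Set.mem_range_self v)

lemma mrad_le_mecc (v : V) : G.mrad ≤ G.mecc v := Nat.sInf_le (Set.mem_range_self v)

include hG in
lemma exists_center : ∃ c, G.mecc c = G.mrad := by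
  have hne : (Set.range G.mecc).Nonempty := by
    obtain ⟨v⟩ := hG.nonempty
    exact ⟨_, Set.mem_range_self v⟩
  exact Nat.sInf_mem hne

include hG in
lemma exists_diam_vertex : ∃ u, G.mecc u = G.mdiam := by
  have hne : (Set.range G.mecc).Nonempty := by
    obtain ⟨v⟩ := hG.nonempty
    exact ⟨_, Set.mem_range_self v⟩
  exact Nat.sSup_mem hne (Set.finite_range _).bddAbove

include hG in
lemma exists_diametral_pair : ∃ u v, G.dist u v = G.mdiam ∧
    G.mecc u = G.mdiam ∧ G.mecc v = G.mdiam := by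
  obtain ⟨u, hu⟩ := exists_diam_vertex hG
  obtain ⟨v, hv⟩ := exists_partner u
  refine ⟨u, v, hv.trans hu, hu, le_antisymm (mecc_le_mdiam hG v) ?_⟩
  calc G.mdiam = G.dist u v := (hv.trans hu).symm
    _ = G.dist v u := G.dist_comm
    _ ≤ G.mecc v := dist_le_mecc v u

include hG in
lemma mdiam_le_two_mrad : G.mdiam ≤ 2 * G.mrad := by
  obtain ⟨c, hc⟩ := exists_center hG
  obtain ⟨u, hu⟩ := exists_diam_vertex hG
  calc G.mdiam = G.mecc u := hu.symm
    _ ≤ G.dist u c + G.mecc c := mecc_le_add hG u c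
    _ = G.dist c u + G.mecc c := by rw [G.dist_comm]
    _ ≤ G.mecc c + G.mecc c := by gcongr; exact dist_le_mecc c u
    _ = 2 * G.mrad := by rw [hc]; ring

include hG in
lemma mecc_adj {a b : V} (hab : G.Adj a b) : G.mecc b ≤ G.mecc a + 1 := by
  have := mecc_le_add hG b a
  rwa [G.dist_comm, (G.dist_eq_one_iff_adj).2 hab, add_comm] at this

end Basics2

set_option linter.unusedSectionVars false

section WalkTools
variable {W : Type*} {H : SimpleGraph W}

/-- Discrete IVT along a walk. -/
lemma walk_ivt (f : W → ℕ) (hf : ∀ a b, H.Adj a b → f b ≤ f a + 1)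
    {x y : W} (p : H.Walk x y) (m : ℕ) (h1 : f x ≤ m) (h2 : m ≤ f y) :
    ∃ z ∈ p.support, f z = m := by
  induction p with
  | nil => exact ⟨_, by simp, le_antisymm h1 h2⟩
  | @cons a b c hadj q ih =>
    rcases eq_or_lt_of_le h1 with he | hlt
    · exact ⟨a, by simp, he⟩
    · obtain ⟨z, hz, hfz⟩ := ih (le_trans (hf a b hadj) hlt) h2
      exact ⟨z, by simp [hz], hfz⟩

lemma isPath_append_of {u v w : W} {p : H.Walk u v} {q : H.Walk v w}
    (hp : p.IsPath) (hq : q.IsPath)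
    (hsup : ∀ x, x ∈ p.support → x ∈ q.support → x = v) :
    (p.append q).IsPath := by
  rw [Walk.isPath_def, Walk.support_append, List.nodup_append]
  refine ⟨hp.support_nodup, ?_, ?_⟩
  · exact hq.support_nodup.tail
  · intro x hx y hx' hxy
    rw [← hxy] at hx'
    have hxq : x ∈ q.support := List.mem_of_mem_tail hx'
    have : x = v := hsup x hx hxq
    subst this
    have := hq.support_nodup
    rw [q.support_eq_cons] at this
    exact (List.nodup_cons.1 this).1 hx'

/-- On a geodesic walk, distances to the endpoints split additively. -/
lemma dist_split (hH : H.Connected) {u v z : W} (p : H.Walk u v)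
    (hp : p.length = H.dist u v) (hz : z ∈ p.support) :
    H.dist u z + H.dist z v = H.dist u v := by
  classical
  have h1 : H.dist u z ≤ (p.takeUntil z hz).length := H.dist_le _
  have h2 : H.dist z v ≤ (p.dropUntil z hz).length := H.dist_le _
  have h3 : (p.takeUntil z hz).length + (p.dropUntil z hz).length = p.length := by
    have := congrArg Walk.length (p.take_spec hz)
    rwa [Walk.length_append] at this
  have h4 : H.dist u v ≤ H.dist u z + H.dist z v := hH.dist_triangle
  omega

lemma dist_getVert_le {u v : W} (hH : H.Connected) (p : H.Walk u v) :
    ∀ i j, i ≤ j → j ≤ p.length → H.dist (p.getVert i) (p.getVert j) ≤ j - i := by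
  intro i j hij hj
  induction j with
  | zero => simp_all
  | succ n ih =>
    rcases Nat.lt_or_ge i (n+1) with hlt | hge
    · have hin : i ≤ n := by omega
      have h1 : H.dist (p.getVert i) (p.getVert n) ≤ n - i := ih hin (by omega)
      have h2 : H.Adj (p.getVert n) (p.getVert (n+1)) := p.adj_getVert_succ (by omega)
      calc H.dist (p.getVert i) (p.getVert (n+1))
          ≤ H.dist (p.getVert i) (p.getVert n) + H.dist (p.getVert n) (p.getVert (n+1)) :=
            hH.dist_triangle
        _ ≤ (n - i) + 1 :=
            add_le_add h1 (le_of_eq (dist_eq_one_iff_adj.2 h2))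
        _ ≤ (n+1) - i := by omega
    · have : i = n+1 := by omega
      subst this
      simp

end WalkTools

/-- distance in an induced subgraph dominates ambient distance. -/
lemma dist_induce_ge {S : Set V} (hr : (G.induce S).Connected) (x y : ↥S) :
    G.dist x.val y.val ≤ (G.induce S).dist x y := by
  obtain ⟨p, hp⟩ := (hr x y).exists_walk_length_eq_dist
  have := G.dist_le (p.map (SimpleGraph.Embedding.induce S).toHom)
  rwa [Walk.length_map, hp] at this

/-- Key lemma: a finite connected graph in which every vertex has some vertex
at distance at least `k` has at least `2k` vertices. -/
lemma two_k_le_card {W : Type*} [Fintype W] {H : SimpleGraph W} (hH : H.Connected) (k : ℕ)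
    (hk : ∀ x : W, ∃ y, k ≤ H.dist x y) : 2 * k ≤ Fintype.card W := by
  classical
  set S : Set ℕ := {n | ∃ (x y : W) (p : H.Walk x y), p.IsPath ∧ p.length = n} with hS
  have hSne : S.Nonempty := by
    obtain ⟨v⟩ := hH.nonempty
    exact ⟨0, v, v, Walk.nil, by simp, rfl⟩
  have hSbdd : BddAbove S := by
    refine ⟨Fintype.card W, ?_⟩
    rintro n ⟨x, y, p, hp, rfl⟩
    exact le_of_lt hp.length_lt
  obtain ⟨x, y, p, hp, hpl⟩ := Nat.sSup_mem hSne hSbdd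
  set L := sSup S with hL
  have hmax : ∀ {a b : W} (q : H.Walk a b), q.IsPath → q.length ≤ L :=
    fun q hq => le_csSup hSbdd ⟨_, _, q, hq, rfl⟩
  set h := (L + 1) / 2 with hh
  have hhL : h ≤ L := by omega
  set m := p.getVert h with hm
  have main : ∀ z, H.dist m z ≤ h := by
    intro z
    obtain ⟨t, htmem, hmin⟩ := Finset.exists_min_image (Finset.range (p.length + 1))
      (fun i => H.dist z (p.getVert i)) ⟨0, by simp⟩
    have htL : t ≤ p.length := by
      have := Finset.mem_range.1 htmem; omega
    set a := p.getVert t with ha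
    have hmin' : ∀ w ∈ p.support, H.dist z a ≤ H.dist z w := by
      intro w hw
      obtain ⟨i, hi, hiL⟩ := Walk.mem_support_iff_exists_getVert.1 hw
      have := hmin i (Finset.mem_range.2 (by omega))
      rw [hi] at this
      exact this
    have haS : a ∈ p.support := Walk.mem_support_iff_exists_getVert.2 ⟨t, rfl, htL⟩
    set t' := (p.takeUntil a haS).length with ht'
    have ht'L : t' ≤ p.length := p.length_takeUntil_le haS
    have hgv : p.getVert t' = a := by
      have hsp := p.take_spec haS
      have := congrArg (fun w => w.getVert t') hsp
      simp only [Walk.getVert_append] at this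
      rw [← this]
      simp [← ht', Walk.getVert_zero]
    -- geodesic from a to z
    obtain ⟨q, hq, hql⟩ := hH.exists_path_of_dist a z
    set δ := H.dist a z with hδ
    have hkey : ∀ w, w ∈ q.support → w ∈ p.support → w = a := by
      intro w hwq hwp
      have hsplit := dist_split hH q hql hwq
      have h1 : H.dist z a ≤ H.dist z w := hmin' w hwp
      have e1 : H.dist z a = H.dist a z := SimpleGraph.dist_comm
      have e2 : H.dist z w = H.dist w z := SimpleGraph.dist_comm
      have : H.dist a w = 0 := by omega
      exact ((hH.dist_eq_zero_iff).1 this).symm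
    -- first bound : t' + δ ≤ L
    have hb1 : t' + δ ≤ L := by
      have hpath : ((p.takeUntil a haS).append q).IsPath := by
        refine isPath_append_of (hp.takeUntil haS) hq ?_
        intro w hw1 hw2
        exact hkey w hw2 (p.support_takeUntil_subset haS hw1)
      have := hmax _ hpath
      rwa [Walk.length_append, hql] at this
    -- second bound : (L - t') + δ ≤ L
    have hdroplen : (p.dropUntil a haS).length = p.length - t' := by
      have hsp := congrArg Walk.length (p.take_spec haS)
      rw [Walk.length_append] at hsp
      omega
    have hb2 : (L - t') + δ ≤ L := by
      have hpath : (((p.dropUntil a haS).reverse).append q).IsPath := by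
        refine isPath_append_of ((hp.dropUntil haS).reverse) hq ?_
        intro w hw1 hw2
        rw [Walk.support_reverse, List.mem_reverse] at hw1
        exact hkey w hw2 (p.support_dropUntil_subset haS hw1)
      have := hmax _ hpath
      rw [Walk.length_append, Walk.length_reverse, hdroplen, hql] at this
      omega
    -- combine
    have htri : H.dist m z ≤ H.dist m a + δ := by
      have := hH.dist_triangle (u := m) (v := a) (w := z)
      omega
    rcases le_or_gt t' h with hc | hc
    · have hd : H.dist m a ≤ h - t' := by
        have := dist_getVert_le hH p t' h hc (by omega)
        rw [hgv, ← hm] at this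
        have e : H.dist m a = H.dist a m := SimpleGraph.dist_comm
        omega
      omega
    · have hd : H.dist m a ≤ t' - h := by
        have := dist_getVert_le hH p h t' (le_of_lt hc) (by omega)
        rw [hgv, ← hm] at this
        exact this
      omega
  obtain ⟨w, hw⟩ := hk m
  have h1 : k ≤ h := le_trans hw (main w)
  have h2 : L < Fintype.card W := hpl ▸ hp.length_lt
  omega

section NearA
variable (hG : G.Connected)

include hG in
lemma mecc_le_of {v : V} {n : ℕ} (hb : ∀ w, G.dist v w ≤ n) : G.mecc v ≤ n := by
  refine csSup_le ⟨_, Set.mem_range_self v⟩ ?_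
  rintro _ ⟨w, rfl⟩
  exact hb w

include hG in
lemma exists_near_A (hrd : G.mrad + 2 ≤ G.mdiam) (p : V) (hp : G.mecc p = G.mdiam) :
    ∃ a, G.mecc a + 1 = G.mdiam ∧ G.dist a p + G.mdiam ≤ 2 * G.mrad + 1 := by
  obtain ⟨c, hc⟩ := exists_center hG
  obtain ⟨q, hqp, hql⟩ := hG.exists_path_of_dist c p
  obtain ⟨a, haS, hae⟩ := walk_ivt G.mecc (fun a b hab => mecc_adj hG hab) q (G.mdiam - 1)
      (by omega) (by omega)
  have hsplit := dist_split hG q hql haS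
  have h1 : G.dist c p ≤ G.mrad := by
    have := dist_le_mecc (G := G) c p; omega
  have h2 : G.mecc a ≤ G.dist a c + G.mecc c := mecc_le_add hG a c
  have e : G.dist a c = G.dist c a := SimpleGraph.dist_comm
  exact ⟨a, by omega, by omega⟩

end NearA

/-- In the case radius 2, diameter 4, the annulus has at least 4 vertices. -/
lemma annulus_four (hG : G.Connected) (hAc : (G.induce G.mannulus).Connected)
    (hr : G.mrad = 2) (hd : G.mdiam = 4)
    {u v : V} (huv : G.dist u v = 4) (hu : G.mecc u = 4) (hv : G.mecc v = 4)
    [Fintype ↥G.mannulus] :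
    4 ≤ G.mannulus.toFinset.card := by
  classical
  have hrd : G.mrad + 2 ≤ G.mdiam := by omega
  -- a1 adjacent-ish to u
  obtain ⟨a1, ha1e, ha1d⟩ := exists_near_A hG hrd u (hu.trans hd.symm)
  obtain ⟨a3, ha3e, ha3d⟩ := exists_near_A hG hrd v (hv.trans hd.symm)
  simp only [hr, hd] at ha1e ha1d ha3e ha3d
  have hd1u : G.dist a1 u = 1 := by
    have h2 : G.mecc u ≤ G.dist u a1 + G.mecc a1 := mecc_le_add hG u a1
    have e : G.dist u a1 = G.dist a1 u := SimpleGraph.dist_comm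
    omega
  have hd3v : G.dist a3 v = 1 := by
    have h2 : G.mecc v ≤ G.dist v a3 + G.mecc a3 := mecc_le_add hG v a3
    have e : G.dist v a3 = G.dist a3 v := SimpleGraph.dist_comm
    omega
  have hd3u : G.dist u a3 = 3 := by
    have h1 : G.dist u v ≤ G.dist u a3 + G.dist a3 v := hG.dist_triangle
    have h2 : G.dist a3 u ≤ G.mecc a3 := dist_le_mecc a3 u
    have e : G.dist u a3 = G.dist a3 u := SimpleGraph.dist_comm
    omega
  have hd1u' : G.dist u a1 = 1 := SimpleGraph.dist_comm.trans hd1u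
  have hA1 : a1 ∈ G.mannulus := by constructor <;> omega
  have hA3 : a3 ∈ G.mannulus := by constructor <;> omega
  -- middle annulus vertex
  obtain ⟨w13⟩ : (G.induce G.mannulus).Reachable ⟨a1, hA1⟩ ⟨a3, hA3⟩ := hAc.preconnected _ _
  obtain ⟨z, hzS, hze⟩ := walk_ivt (fun z : ↥G.mannulus => G.dist u z.val)
      (fun a b hab => by
        show G.dist u (b.val) ≤ G.dist u (a.val) + 1
        have hadj : G.Adj a.val b.val := hab
        have h1 : G.dist u b.val ≤ G.dist u a.val + G.dist a.val b.val := hG.dist_triangle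
        have h2 : G.dist a.val b.val = 1 := (SimpleGraph.dist_eq_one_iff_adj).2 hadj
        omega) w13 2 (by simpa [hd1u'] using Nat.one_le_two) (by simp [hd3u])
  set a2 := z.val with ha2
  have hA2 : a2 ∈ G.mannulus := z.prop
  have hd2u : G.dist u a2 = 2 := hze
  -- suppose only 3 annulus vertices
  by_contra hcon
  push_neg at hcon
  have hne12 : a1 ≠ a2 := fun h => by rw [h] at hd1u'; omega
  have hne13 : a1 ≠ a3 := fun h => by rw [h] at hd1u'; omega
  have hne23 : a2 ≠ a3 := fun h => by rw [h] at hd2u; omega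
  have hsub : ({a1, a2, a3} : Finset V) ⊆ G.mannulus.toFinset := by
    intro x hx
    simp only [Finset.mem_insert, Finset.mem_singleton] at hx
    rcases hx with rfl | rfl | rfl <;> simp [Set.mem_toFinset, hA1, hA2, hA3]
  have hcard3 : ({a1, a2, a3} : Finset V).card = 3 := by
    rw [Finset.card_insert_of_notMem (by simp [hne12, hne13]),
        Finset.card_insert_of_notMem (by simp [hne23]), Finset.card_singleton]
  have heq : ({a1, a2, a3} : Finset V) = G.mannulus.toFinset :=
    Finset.eq_of_subset_of_card_le hsub (by omega)
  have hAmem : ∀ x, x ∈ G.mannulus → x = a1 ∨ x = a2 ∨ x = a3 := by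
    intro x hx
    have : x ∈ ({a1, a2, a3} : Finset V) := heq ▸ Set.mem_toFinset.2 hx
    simpa using this
  have hd13 : 2 ≤ G.dist a1 a3 := by
    have h1 : G.dist u a3 ≤ G.dist u a1 + G.dist a1 a3 := hG.dist_triangle
    omega
  -- a1 ~ a2 and a3 ~ a2
  have hecc3 : ∀ x, x ∈ G.mannulus → G.mecc x = 3 := by
    intro x hx
    have h1 := hx.1
    have h2 := hx.2
    omega
  have first_step : ∀ (b e : V) (hb : b ∈ G.mannulus) (he : e ∈ G.mannulus),
      (G.induce G.mannulus).Walk ⟨b, hb⟩ ⟨e, he⟩ → b ≠ e →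
      (2 ≤ G.dist b e) → ∃ x, x ∈ G.mannulus ∧ x ≠ b ∧ x ≠ e ∧ G.Adj b x := by
    intro b e hb he w hne hdist
    cases w with
    | nil => exact absurd rfl hne
    | cons hadj rest =>
      rename_i bvert
      have hadj' : G.Adj b bvert.val := hadj
      refine ⟨bvert.val, bvert.prop, ?_, ?_, hadj'⟩
      · intro h; rw [h] at hadj'; exact G.irrefl hadj'
      · intro h
        rw [h] at hadj'
        have := (SimpleGraph.dist_eq_one_iff_adj).2 hadj'
        omega
  obtain ⟨x12, hx12A, hx12b, hx12e, hadj12⟩ := first_step a1 a3 hA1 hA3 w13 (by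
      intro h; rw [h] at hd1u'; omega) hd13
  have hx12 : x12 = a2 := by
    rcases hAmem x12 hx12A with h | h | h
    · exact absurd h hx12b
    · exact h
    · exact absurd h hx12e
  rw [hx12] at hadj12
  obtain ⟨x32, hx32A, hx32b, hx32e, hadj32⟩ := first_step a3 a1 hA3 hA1 w13.reverse (by
      intro h; rw [← h] at hd1u'; omega) (by
      have e : G.dist a3 a1 = G.dist a1 a3 := SimpleGraph.dist_comm
      omega)
  have hx32 : x32 = a2 := by
    rcases hAmem x32 hx32A with h | h | h
    · exact absurd h hx32e
    · exact h
    · exact absurd h hx32b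
  rw [hx32] at hadj32
  -- distances from a2 within the annulus
  have hda2 : ∀ j, (j = a1 ∨ j = a2 ∨ j = a3) → G.dist a2 j ≤ 1 := by
    rintro j (rfl | rfl | rfl)
    · exact le_of_eq ((SimpleGraph.dist_eq_one_iff_adj).2 hadj12.symm)
    · simp [SimpleGraph.dist_self]
    · exact le_of_eq ((SimpleGraph.dist_eq_one_iff_adj).2 hadj32.symm)
  -- every peripheral vertex is adjacent to one of the three
  obtain ⟨c₀, hc₀⟩ := exists_center hG
  have dom : ∀ p, G.mecc p = 4 → ∃ x, (x = a1 ∨ x = a2 ∨ x = a3) ∧ G.Adj x p := by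
    intro p hp
    have hcd : G.dist c₀ p = 2 := by
      have h1 : G.dist c₀ p ≤ G.mecc c₀ := dist_le_mecc c₀ p
      have h2 : G.mecc p ≤ G.dist p c₀ + G.mecc c₀ := mecc_le_add hG p c₀
      have e : G.dist p c₀ = G.dist c₀ p := SimpleGraph.dist_comm
      omega
    obtain ⟨q, hq, hql⟩ := hG.exists_path_of_dist c₀ p
    rw [hcd] at hql
    set x := q.getVert 1 with hx
    have hadjcx : G.Adj c₀ x := by
      have := q.adj_getVert_succ (i := 0) (by omega)
      simpa using this
    have hadjxp : G.Adj x p := by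
      have := q.adj_getVert_succ (i := 1) (by omega)
      have h2 : q.getVert 2 = p := by
        have := q.getVert_length
        rw [hql] at this
        exact this
      rwa [h2] at this
    have hex1 : G.mecc x ≤ 3 := by
      have := mecc_adj hG hadjcx
      omega
    have hex2 : 3 ≤ G.mecc x := by
      have h2 : G.mecc p ≤ G.dist p x + G.mecc x := mecc_le_add hG p x
      have h3 : G.dist p x = 1 := (SimpleGraph.dist_eq_one_iff_adj).2 hadjxp.symm
      omega
    have hxA : x ∈ G.mannulus := by constructor <;> omega
    exact ⟨x, hAmem x hxA, hadjxp⟩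
  -- a2 is adjacent to no peripheral vertex
  have nodom2 : ∀ p, G.mecc p = 4 → ¬ G.Adj a2 p := by
    intro p hp hadj2
    obtain ⟨q', hq'⟩ := exists_partner p
    rw [hp] at hq'
    have hq'e : G.mecc q' = 4 := by
      have h1 : G.dist q' p ≤ G.mecc q' := dist_le_mecc q' p
      have h2 : G.mecc q' ≤ G.mdiam := mecc_le_mdiam hG q'
      have e : G.dist q' p = G.dist p q' := SimpleGraph.dist_comm
      omega
    obtain ⟨x', hx', hadjx'⟩ := dom q' hq'e
    have h1 : G.dist p q' ≤ G.dist p a2 + G.dist a2 q' := hG.dist_triangle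
    have h2 : G.dist a2 q' ≤ G.dist a2 x' + G.dist x' q' := hG.dist_triangle
    have h3 : G.dist p a2 = 1 := (SimpleGraph.dist_eq_one_iff_adj).2 hadj2.symm
    have h4 : G.dist x' q' = 1 := (SimpleGraph.dist_eq_one_iff_adj).2 hadjx'
    have h5 : G.dist a2 x' ≤ 1 := hda2 x' hx'
    omega
  -- a2 has eccentricity at most 2 : contradiction
  have : G.mecc a2 ≤ 2 := by
    refine mecc_le_of hG ?_
    intro w
    have hw1 : G.mrad ≤ G.mecc w := mrad_le_mecc w
    have hw2 : G.mecc w ≤ G.mdiam := mecc_le_mdiam hG w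
    rcases (show G.mecc w = 2 ∨ G.mecc w = 3 ∨ G.mecc w = 4 by omega) with h | h | h
    · have := dist_le_mecc (G := G) w a2
      have e : G.dist a2 w = G.dist w a2 := SimpleGraph.dist_comm
      omega
    · have hwA : w ∈ G.mannulus := by constructor <;> omega
      exact le_trans (hda2 w (hAmem w hwA)) one_le_two
    · obtain ⟨x, hx, hadjx⟩ := dom w h
      have hxne : x ≠ a2 := by
        intro he; rw [he] at hadjx; exact nodom2 w h hadjx
      have h1 : G.dist a2 w ≤ G.dist a2 x + G.dist x w := hG.dist_triangle
      have h2 : G.dist x w = 1 := (SimpleGraph.dist_eq_one_iff_adj).2 hadjx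
      have h3 : G.dist a2 x ≤ 1 := hda2 x hx
      omega
  have : G.mecc a2 = 3 := hecc3 a2 hA2
  omega

end AUX

theorem connected_peripheral_and_annular_subgraphs_order_ge_13
    {V : Type*} [Fintype V] (G : SimpleGraph V) (hG : G.Connected)
    (hP : (G.induce G.mperiphery).Connected)
    (hA : G.mannulus.Nonempty) (hAc : (G.induce G.mannulus).Connected) :
    13 ≤ Fintype.card V := by
  classical
  obtain ⟨a₀, ha₀⟩ := hA
  have hrd : G.mrad + 2 ≤ G.mdiam := by
    have h1 : G.mrad < G.mecc a₀ := ha₀.1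
    have h2 : G.mecc a₀ < G.mdiam := ha₀.2
    omega
  have hd2r := mdiam_le_two_mrad hG
  obtain ⟨u, v, huv, hu, hv⟩ := exists_diametral_pair hG
  obtain ⟨c₀, hc₀⟩ := exists_center hG
  haveI : Fintype ↥G.mperiphery := Set.Finite.fintype (Set.toFinite _)
  haveI : Fintype ↥G.mannulus := Set.Finite.fintype (Set.toFinite _)
  set PF := G.mperiphery.toFinset with hPF
  set AF := G.mannulus.toFinset with hAF
  set CF : Finset V := Finset.univ.filter (fun x => G.mecc x = G.mrad) with hCF
  have hmemP : ∀ x, x ∈ PF ↔ G.mecc x = G.mdiam := fun x => Set.mem_toFinset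
  have hmemA : ∀ x, x ∈ AF ↔ (G.mrad < G.mecc x ∧ G.mecc x < G.mdiam) :=
    fun x => Set.mem_toFinset
  have hmemC : ∀ x, x ∈ CF ↔ G.mecc x = G.mrad := fun x => by simp [hCF]
  have hdisj1 : Disjoint PF AF := by
    rw [Finset.disjoint_left]; intro x h1 h2
    rw [hmemP] at h1; rw [hmemA] at h2; omega
  have hdisj2 : Disjoint (PF ∪ AF) CF := by
    rw [Finset.disjoint_left]; intro x h1 h2
    rw [hmemC] at h2
    rcases Finset.mem_union.1 h1 with h | h
    · rw [hmemP] at h; omega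
    · rw [hmemA] at h; omega
  have hsum : PF.card + AF.card + CF.card ≤ Fintype.card V := by
    have h1 : (PF ∪ AF ∪ CF).card ≤ Fintype.card V := by
      simpa using Finset.card_le_univ (PF ∪ AF ∪ CF)
    rwa [Finset.card_union_of_disjoint hdisj2, Finset.card_union_of_disjoint hdisj1] at h1
  have hPcard : 2 * G.mdiam ≤ PF.card := by
    have hcard : Fintype.card ↥G.mperiphery = PF.card := by
      rw [hPF, Set.toFinset_card]
    rw [← hcard]
    refine two_k_le_card hP G.mdiam ?_
    rintro ⟨x, hx⟩
    obtain ⟨w, hw⟩ := exists_partner (G := G) x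
    have hx' : G.mecc x = G.mdiam := by exact hx
    have hwP : w ∈ G.mperiphery := by
      have h1 : G.dist w x ≤ G.mecc w := dist_le_mecc (G := G) w x
      have h2 : G.mecc w ≤ G.mdiam := mecc_le_mdiam hG w
      have e : G.dist w x = G.dist x w := SimpleGraph.dist_comm
      show G.mecc w = G.mdiam
      omega
    refine ⟨⟨w, hwP⟩, ?_⟩
    have h3 := dist_induce_ge (G := G) hP ⟨x, hx⟩ ⟨w, hwP⟩
    simp only at h3
    omega
  have hC1 : 1 ≤ CF.card := Finset.card_pos.2 ⟨c₀, (hmemC c₀).2 hc₀⟩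
  rcases (show (G.mdiam = 4 ∧ G.mrad = 2) ∨ (G.mdiam = 5 ∧ G.mrad = 3) ∨ 6 ≤ G.mdiam
    by omega) with ⟨hd, hr⟩ | ⟨hd, hr⟩ | hd6
  · -- diameter 4, radius 2
    have h4 : 4 ≤ AF.card :=
      annulus_four hG hAc hr hd (huv.trans hd) (hu.trans hd) (hv.trans hd)
    omega
  · -- diameter 5, radius 3
    obtain ⟨au, haue, haud⟩ := exists_near_A hG hrd u hu
    obtain ⟨av, hav1, hav2⟩ := exists_near_A hG hrd v hv
    simp only [hd, hr] at haue haud hav1 hav2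
    have hdau : G.dist au u ≤ 2 := by omega
    have hdav : G.dist av v ≤ 2 := by omega
    have hne : au ≠ av := by
      intro h
      rw [← h] at hdav
      have h1 : G.dist u v ≤ G.dist u au + G.dist au v := hG.dist_triangle
      have e1 : G.dist u au = G.dist au u := SimpleGraph.dist_comm
      omega
    have hauA : au ∈ AF := (hmemA au).2 (by omega)
    have havA : av ∈ AF := (hmemA av).2 (by omega)
    have h2 : 2 ≤ AF.card := by
      have hsub : ({au, av} : Finset V) ⊆ AF := by
        intro x hx
        rcases Finset.mem_insert.1 hx with rfl | hx
        · exact hauA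
        · rw [Finset.mem_singleton] at hx; subst hx; exact havA
      have : ({au, av} : Finset V).card = 2 := by
        rw [Finset.card_insert_of_notMem (by simpa using hne), Finset.card_singleton]
      calc 2 = ({au, av} : Finset V).card := this.symm
        _ ≤ AF.card := Finset.card_le_card hsub
    omega
  · -- diameter at least 6
    have hA1 : 1 ≤ AF.card := Finset.card_pos.2 ⟨a₀, (hmemA a₀).2 ha₀⟩
    omega
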